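/- Assume in addition κ > 0, and let (λ_n, w_n), n ≥ N, be eigenpairs of problem (P) with ‖w_n‖_{L²} = 1 and λ_n = i·ρ_n², where | ρ_n − [ (n + 1/2)π + (β²η²/2 + γ − η² + 2iβη + 2i/κ)/(4(n + 1/2)π) ] | ≤ C/n² for some constant C > 0. Then (1/|λ_n|²)·( ∫₀¹ |w_n''(s)|² ds + (γ − η²)·∫₀¹ |w_n'(s)|² ds ) + ∫₀¹ |w_n(s)|² ds → 2 as n → ∞. -/

import Mathlib

open Set Complex

/-- An eigenpair of problem (P): `w` is a nonzero `C⁴` function on `[0,1]`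
satisfying the ODE `w'''' − (γ−η²)w'' + 2λβη w' + λ²w = 0` together with the
boundary conditions `w(0) = w''(0) = 0`, `w''(1) + λκ w'(1) = 0`,
`w'''(1) − (γ−η²) w'(1) = 0`. -/
def IsEigenpairP (β η γ κ : ℝ) (l : ℂ) (w : ℝ → ℂ) : Prop :=
  ContDiff ℝ 4 w ∧ (∃ s ∈ Icc (0:ℝ) 1, w s ≠ 0) ∧
  (∀ s ∈ Icc (0:ℝ) 1,
    iteratedDeriv 4 w s - ((γ - η^2 : ℝ) : ℂ) * iteratedDeriv 2 w s
      + 2 * l * ((β * η : ℝ) : ℂ) * deriv w s + l^2 * w s = 0) ∧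
  w 0 = 0 ∧ iteratedDeriv 2 w 0 = 0 ∧
  iteratedDeriv 2 w 1 + l * ((κ : ℝ) : ℂ) * deriv w 1 = 0 ∧
  iteratedDeriv 3 w 1 - ((γ - η^2 : ℝ) : ℂ) * deriv w 1 = 0

/-- An eigenvalue of problem (P). -/
def IsEigenvalueP (β η γ κ : ℝ) (l : ℂ) : Prop :=
  ∃ w : ℝ → ℂ, IsEigenpairP β η γ κ l w

open Filter Topology

section Aux

set_option maxHeartbeats 1000000

open intervalIntegral MeasureTheory

private lemma myconj {f : ℝ → ℂ} {a b : ℝ} :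
    ∫ s in a..b, (starRingEnd ℂ) (f s) = (starRingEnd ℂ) (∫ s in a..b, f s) := by
  simp only [intervalIntegral, ← integral_conj, map_sub]

private lemma ibp_conj {f g f' g' : ℝ → ℂ} (hf : ∀ s, HasDerivAt f (f' s) s)
    (hg : ∀ s, HasDerivAt g (g' s) s) (hfc : Continuous f') (hgc : Continuous g') :
    ∫ s in (0:ℝ)..1, f' s * (starRingEnd ℂ) (g s)
      = f 1 * (starRingEnd ℂ) (g 1) - f 0 * (starRingEnd ℂ) (g 0)
        - ∫ s in (0:ℝ)..1, f s * (starRingEnd ℂ) (g' s) := by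
  have hfcont : Continuous f := Differentiable.continuous (fun s => (hf s).differentiableAt)
  have hgcont : Continuous g := Differentiable.continuous (fun s => (hg s).differentiableAt)
  have h := intervalIntegral.integral_deriv_mul_eq_sub (a := 0) (b := 1)
    (u := f) (v := fun x => (starRingEnd ℂ) (g x)) (u' := f') (v' := fun s => (starRingEnd ℂ) (g' s))
    (fun x _ => hf x) (fun x _ => (hg x).star)
    (hfc.intervalIntegrable _ _) ((Complex.continuous_conj.comp hgc).intervalIntegrable _ _)
  have hsplit : ∫ s in (0:ℝ)..1, (f' s * (starRingEnd ℂ) (g s) + f s * (starRingEnd ℂ) (g' s)) =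
      (∫ s in (0:ℝ)..1, f' s * (starRingEnd ℂ) (g s)) + ∫ s in (0:ℝ)..1, f s * (starRingEnd ℂ) (g' s) :=
    intervalIntegral.integral_add
      ((hfc.mul (Complex.continuous_conj.comp hgcont)).intervalIntegrable _ _)
      ((hfcont.mul (Complex.continuous_conj.comp hgc)).intervalIntegrable _ _)
  rw [hsplit] at h
  linear_combination h

private lemma sq_integral_conj_self {f : ℝ → ℂ} (hf : Continuous f) :
    ∫ s in (0:ℝ)..1, f s * (starRingEnd ℂ) (f s) = (((∫ s in (0:ℝ)..1, ‖f s‖^2 : ℝ)) : ℂ) := by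
  rw [← intervalIntegral.integral_ofReal]
  apply intervalIntegral.integral_congr
  intro s _
  show f s * (starRingEnd ℂ) (f s) = ((‖f s‖^2 : ℝ) : ℂ)
  rw [Complex.mul_conj]
  norm_cast
  rw [Complex.normSq_eq_norm_sq]

private lemma young_conj {f g : ℝ → ℂ} (hf : Continuous f) (hg : Continuous g) {t : ℝ} (ht : 0 ≤ t) :
    2*t*‖∫ s in (0:ℝ)..1, f s * (starRingEnd ℂ) (g s)‖
      ≤ (∫ s in (0:ℝ)..1, ‖f s‖^2) + t^2 * (∫ s in (0:ℝ)..1, ‖g s‖^2) := by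
  have h1 : ‖∫ s in (0:ℝ)..1, f s * (starRingEnd ℂ) (g s)‖
      ≤ ∫ s in (0:ℝ)..1, ‖f s * (starRingEnd ℂ) (g s)‖ :=
    intervalIntegral.norm_integral_le_integral_norm zero_le_one
  have h3 : (∫ s in (0:ℝ)..1, ‖f s * (starRingEnd ℂ) (g s)‖)
      = ∫ s in (0:ℝ)..1, ‖f s‖ * ‖g s‖ := by
    apply intervalIntegral.integral_congr; intro s _
    show ‖f s * (starRingEnd ℂ) (g s)‖ = ‖f s‖ * ‖g s‖
    rw [norm_mul, RCLike.norm_conj]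
  have h4 : (∫ s in (0:ℝ)..1, (2*t)*(‖f s‖ * ‖g s‖))
      ≤ ∫ s in (0:ℝ)..1, (‖f s‖^2 + t^2*‖g s‖^2) := by
    apply intervalIntegral.integral_mono_on zero_le_one
    · exact ((continuous_const.mul ((hf.norm).mul (hg.norm)))).intervalIntegrable _ _
    · exact (((hf.norm).pow 2).add (continuous_const.mul ((hg.norm).pow 2))).intervalIntegrable _ _
    · intro s _
      nlinarith [sq_nonneg (‖f s‖ - t*‖g s‖), norm_nonneg (f s), norm_nonneg (g s)]
  rw [intervalIntegral.integral_const_mul] at h4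
  rw [intervalIntegral.integral_add (f := fun s => ‖f s‖^2) (g := fun s => t^2*‖g s‖^2)
    (((hf.norm).pow 2).intervalIntegrable _ _)
    ((continuous_const.mul ((hg.norm).pow 2)).intervalIntegrable _ _),
    intervalIntegral.integral_const_mul] at h4
  calc 2*t*‖∫ s in (0:ℝ)..1, f s * (starRingEnd ℂ) (g s)‖
      ≤ 2*t*(∫ s in (0:ℝ)..1, ‖f s‖ * ‖g s‖) := by
        rw [← h3]; exact mul_le_mul_of_nonneg_left h1 (by linarith)
    _ ≤ _ := h4

private lemma lam_re (r : ℂ) : (Complex.I * r^2).re = -(2*r.re*r.im) := by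
  simp [pow_two, Complex.mul_re, Complex.mul_im] <;> ring

private lemma lam_im (r : ℂ) : (Complex.I * r^2).im = r.re^2 - r.im^2 := by
  simp [pow_two, Complex.mul_re, Complex.mul_im] <;> ring

private lemma rho_bounds (C : ℝ) (hC : 0 < C) (cc : ℂ) (rr : ℂ) (n : ℕ) (hn1 : 1 ≤ n)
    (hd : ‖rr - (((((n:ℝ)+1/2)*Real.pi :ℝ):ℂ)
        + cc / ((4*((n:ℝ)+1/2)*Real.pi :ℝ):ℂ))‖ ≤ C/(n:ℝ)^2) :
    |rr.re - ((n:ℝ)+1/2)*Real.pi| ≤ C + ‖cc‖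
      ∧ |rr.im| ≤ (C + ‖cc‖)/(n:ℝ) := by
  have hπ := Real.pi_gt_three
  have hn1' : (1:ℝ) ≤ (n:ℝ) := by exact_mod_cast hn1
  have hn0 : (0:ℝ) < (n:ℝ) := by linarith
  set Pr : ℝ := ((n:ℝ)+1/2)*Real.pi with hPr
  set Dr : ℝ := 4*((n:ℝ)+1/2)*Real.pi with hDr
  have hPr3 : 3*(n:ℝ) ≤ Pr := by rw [hPr]; nlinarith
  have hDr0 : 0 < Dr := by rw [hDr]; nlinarith
  have hDr12 : 12*(n:ℝ) ≤ Dr := by rw [hDr]; nlinarith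
  have hccn : 0 ≤ ‖cc‖ := norm_nonneg cc
  have hqabs : ‖cc / ((Dr:ℝ):ℂ)‖ = ‖cc‖ / Dr := by
    rw [norm_div, Complex.norm_real, Real.norm_eq_abs, abs_of_pos hDr0]
  have hqre : |(cc / ((Dr:ℝ):ℂ)).re| ≤ ‖cc‖ / Dr := by
    rw [← hqabs]; exact Complex.abs_re_le_norm _
  have hqim : |(cc / ((Dr:ℝ):ℂ)).im| ≤ ‖cc‖ / Dr := by
    rw [← hqabs]; exact Complex.abs_im_le_norm _
  have hdre : |rr.re - (Pr + (cc / ((Dr:ℝ):ℂ)).re)| ≤ C/(n:ℝ)^2 := by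
    have := Complex.abs_re_le_norm (rr - (((Pr:ℝ):ℂ) + cc / ((Dr:ℝ):ℂ)))
    simp only [Complex.sub_re, Complex.add_re, Complex.ofReal_re] at this
    exact le_trans this hd
  have hdim : |rr.im - (cc / ((Dr:ℝ):ℂ)).im| ≤ C/(n:ℝ)^2 := by
    have := Complex.abs_im_le_norm (rr - (((Pr:ℝ):ℂ) + cc / ((Dr:ℝ):ℂ)))
    simp only [Complex.sub_im, Complex.add_im, Complex.ofReal_im, zero_add] at this
    exact le_trans this hd
  have hCn2 : C/(n:ℝ)^2 ≤ C/(n:ℝ) := by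
    apply div_le_div_of_nonneg_left hC.le hn0
    nlinarith
  have hCn1 : C/(n:ℝ) ≤ C := by
    rw [div_le_iff₀ hn0]; nlinarith
  have hq1 : ‖cc‖ / Dr ≤ ‖cc‖ / (12*(n:ℝ)) := by
    apply div_le_div_of_nonneg_left hccn (by nlinarith) hDr12
  constructor
  · have h2 : |rr.re - Pr| ≤ |rr.re - (Pr + (cc / ((Dr:ℝ):ℂ)).re)| + |(cc / ((Dr:ℝ):ℂ)).re| := by
      have := abs_add_le (rr.re - (Pr + (cc / ((Dr:ℝ):ℂ)).re)) ((cc / ((Dr:ℝ):ℂ)).re)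
      have e : rr.re - (Pr + (cc / ((Dr:ℝ):ℂ)).re) + (cc / ((Dr:ℝ):ℂ)).re = rr.re - Pr := by ring
      rw [e] at this; exact this
    have hq2 : ‖cc‖ / (12*(n:ℝ)) ≤ ‖cc‖ := by
      rw [div_le_iff₀ (by nlinarith)]; nlinarith
    calc |rr.re - Pr| ≤ C/(n:ℝ)^2 + |(cc / ((Dr:ℝ):ℂ)).re| := by linarith [hdre, h2]
      _ ≤ C + ‖cc‖ := by linarith [le_trans hqre (le_trans hq1 hq2), le_trans hCn2 hCn1]
  · have h2 : |rr.im| ≤ |rr.im - (cc / ((Dr:ℝ):ℂ)).im| + |(cc / ((Dr:ℝ):ℂ)).im| := by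
      have := abs_add_le (rr.im - (cc / ((Dr:ℝ):ℂ)).im) ((cc / ((Dr:ℝ):ℂ)).im)
      have e : rr.im - (cc / ((Dr:ℝ):ℂ)).im + (cc / ((Dr:ℝ):ℂ)).im = rr.im := by ring
      rw [e] at this; exact this
    have hq3 : ‖cc‖ / (12*(n:ℝ)) ≤ ‖cc‖ / (n:ℝ) := by
      apply div_le_div_of_nonneg_left hccn hn0; nlinarith
    have : |rr.im| ≤ C/(n:ℝ) + ‖cc‖/(n:ℝ) := by
      linarith [hdim, le_trans hqim (le_trans hq1 hq3), hCn2]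
    calc |rr.im| ≤ C/(n:ℝ) + ‖cc‖/(n:ℝ) := this
      _ = (C + ‖cc‖)/(n:ℝ) := by rw [add_div]

private lemma real_core (m aa κ Y e2 i1 b p RZ IZ re im : ℝ)
    (hm : 0 ≤ m) (ha : 0 < aa) (hκ : 0 < κ) (hY : 1 ≤ Y)
    (hre : |re| ≤ Y) (him1 : 1 ≤ im)
    (he2 : 0 ≤ e2) (hi1 : 0 ≤ i1) (hb : 0 ≤ b) (hp : p = 2*RZ) (hRZ : 0 ≤ RZ)
    (hZ1 : 2*im*(_root_.abs IZ) ≤ i1 + im^2) (hZ2 : 2*im*RZ ≤ i1 + im^2)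
    (h2 : 2*im*i1 ≤ im*(b + p) + (e2 + im^2))
    (hRE : (e2 + aa*i1) + κ*b*re + 2*m*(re*RZ - im*IZ) + (re^2 - im^2) = 0)
    (hIM : κ*b*im + 2*m*(im*RZ + re*IZ) + 2*re*im = 0)
    (hthr : m*Y/κ + 1 + m*Y^2 + m*Y + m ≤ im) :
    i1 ≤ (m*Y/κ + 1 + m*Y^2 + m*Y + m + 2*Y/κ + 2 + 2*Y^2) * im := by
  have him0 : (0:ℝ) < im := lt_of_lt_of_le one_pos him1
  have hYnn : (0:ℝ) ≤ Y := le_trans zero_le_one hY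
  have hIZ0 : 0 ≤ _root_.abs IZ := abs_nonneg IZ
  have hnre : -re ≤ Y := le_trans (neg_le_abs re) hre
  have hIZle : IZ ≤ _root_.abs IZ := le_abs_self IZ
  have st2 : κ*b*im ≤ 2*m*Y*(_root_.abs IZ) + 2*Y*im := by
    have h' : -(re*IZ) ≤ Y*(_root_.abs IZ) := by
      calc -(re*IZ) ≤ |re*IZ| := neg_le_abs _
        _ = (_root_.abs re)*(_root_.abs IZ) := abs_mul _ _
        _ ≤ Y*(_root_.abs IZ) := mul_le_mul_of_nonneg_right hre hIZ0
    have q1 : m*(-(re*IZ)) ≤ m*(Y*(_root_.abs IZ)) := mul_le_mul_of_nonneg_left h' hm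
    have q2 : (-re)*im ≤ Y*im := mul_le_mul_of_nonneg_right hnre him0.le
    have e : κ*b*im = -(2*m*(im*RZ)) - 2*m*(re*IZ) - 2*(re*im) := by linear_combination hIM
    linarith [mul_nonneg (mul_nonneg hm him0.le) hRZ, q1, q2, e]
  have st2' : κ*b*im^2 ≤ m*Y*(i1+im^2) + 2*Y*im^2 := by
    have q3 : (κ*b*im)*im ≤ (2*m*Y*(_root_.abs IZ) + 2*Y*im)*im :=
      mul_le_mul_of_nonneg_right st2 him0.le
    have q4 : (m*Y)*(2*im*(_root_.abs IZ)) ≤ (m*Y)*(i1+im^2) :=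
      mul_le_mul_of_nonneg_left hZ1 (mul_nonneg hm hYnn)
    linarith [q3, q4]
  have hE : e2 ≤ im^2 + Y*(κ*b) + 2*m*(Y*RZ) + 2*m*(im*(_root_.abs IZ)) := by
    have q1 : -(κ*b*re) ≤ Y*(κ*b) := by
      calc -(κ*b*re) = (κ*b)*(-re) := by ring
        _ ≤ (κ*b)*Y := mul_le_mul_of_nonneg_left hnre (mul_nonneg hκ.le hb)
        _ = Y*(κ*b) := by ring
    have h2' : (-re)*RZ ≤ Y*RZ := mul_le_mul_of_nonneg_right hnre hRZ
    have q2 : m*((-re)*RZ) ≤ m*(Y*RZ) := mul_le_mul_of_nonneg_left h2' hm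
    have h3' : im*IZ ≤ im*(_root_.abs IZ) := mul_le_mul_of_nonneg_left hIZle him0.le
    have q3 : m*(im*IZ) ≤ m*(im*(_root_.abs IZ)) := mul_le_mul_of_nonneg_left h3' hm
    linarith [sq_nonneg re, mul_nonneg ha.le hi1, q1, q2, q3]
  have hE2 : e2*im^2 ≤ im^4 + Y*(κ*b*im^2) + m*Y*im*(i1+im^2) + m*im^2*(i1+im^2) := by
    have q0 : e2*im^2 ≤ (im^2 + Y*(κ*b) + 2*m*(Y*RZ) + 2*m*(im*(_root_.abs IZ)))*im^2 :=
      mul_le_mul_of_nonneg_right hE (sq_nonneg im)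
    have q4 : (m*Y*im)*(2*im*RZ) ≤ (m*Y*im)*(i1+im^2) :=
      mul_le_mul_of_nonneg_left hZ2 (by positivity)
    have q5 : (m*im^2)*(2*im*(_root_.abs IZ)) ≤ (m*im^2)*(i1+im^2) :=
      mul_le_mul_of_nonneg_left hZ1 (by positivity)
    linarith [q0, q4, q5]
  have hbim3 : im^3*b ≤ (m*Y/κ)*im*(i1+im^2) + (2*Y/κ)*im^3 := by
    have q := mul_le_mul_of_nonneg_right st2' (mul_nonneg him0.le (inv_pos.mpr hκ).le)
    have e1 : (κ*b*im^2)*(im*κ⁻¹) = im^3*b := by field_simp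
    have e2' : (m*Y*(i1+im^2) + 2*Y*im^2)*(im*κ⁻¹) = (m*Y/κ)*im*(i1+im^2) + (2*Y/κ)*im^3 := by
      field_simp
    rw [e1, e2'] at q; exact q
  have hpim3 : im^3*p ≤ im^2*(i1+im^2) := by
    rw [hp]
    calc im^3*(2*RZ) = im^2*(2*im*RZ) := by ring
      _ ≤ im^2*(i1+im^2) := mul_le_mul_of_nonneg_left hZ2 (sq_nonneg im)
  have hmain : 2*im^3*i1 ≤ ((m*Y/κ)*im + im^2 + m*Y^2 + m*Y*im + m*im^2)*i1
      + ((m*Y/κ)*im + im^2 + m*Y^2 + m*Y*im + m*im^2)*im^2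
      + ((2*Y/κ)*im^3 + im^4 + 2*Y^2*im^2 + im^4) := by
    have q0 : (2*im*i1)*im^2 ≤ (im*(b+p) + (e2+im^2))*im^2 :=
      mul_le_mul_of_nonneg_right h2 (sq_nonneg im)
    have qY : Y*(κ*b*im^2) ≤ Y*(m*Y*(i1+im^2) + 2*Y*im^2) :=
      mul_le_mul_of_nonneg_left st2' hYnn
    linarith [q0, hbim3, hpim3, hE2, qY]
  obtain ⟨K1, hK1⟩ : ∃ K1 : ℝ, K1 = m*Y/κ + 1 + m*Y^2 + m*Y + m := ⟨_, rfl⟩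
  have him2 : im ≤ im^2 := by linarith [mul_nonneg him0.le (sub_nonneg.mpr him1)]
  have h1im : (1:ℝ) ≤ im^2 := by linarith [him2]
  have hcoef : (m*Y/κ)*im + im^2 + m*Y^2 + m*Y*im + m*im^2 ≤ K1*im^2 := by
    have c1 : (m*Y/κ)*im ≤ (m*Y/κ)*im^2 := mul_le_mul_of_nonneg_left him2 (by positivity)
    have c3 : (m*Y^2)*1 ≤ (m*Y^2)*im^2 := mul_le_mul_of_nonneg_left h1im (by positivity)
    have c4 : (m*Y)*im ≤ (m*Y)*im^2 := mul_le_mul_of_nonneg_left him2 (mul_nonneg hm hYnn)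
    rw [hK1]; linarith [c1, c3, c4]
  have hconst : (2*Y/κ)*im^3 + im^4 + 2*Y^2*im^2 + im^4 ≤ (2*Y/κ + 2 + 2*Y^2)*im^4 := by
    have him34 : im^3 ≤ im^4 := by nlinarith [mul_nonneg (pow_pos him0 3).le (sub_nonneg.mpr him1)]
    have him24 : im^2 ≤ im^4 := by nlinarith [mul_nonneg (sq_nonneg im) (sub_nonneg.mpr h1im)]
    have c1 : (2*Y/κ)*im^3 ≤ (2*Y/κ)*im^4 := mul_le_mul_of_nonneg_left him34 (by positivity)
    have c2 : (2*Y^2)*im^2 ≤ (2*Y^2)*im^4 := mul_le_mul_of_nonneg_left him24 (by positivity)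
    linarith [c1, c2]
  have hc_i1 : ((m*Y/κ)*im + im^2 + m*Y^2 + m*Y*im + m*im^2)*i1 ≤ (K1*im^2)*i1 :=
    mul_le_mul_of_nonneg_right hcoef hi1
  have hc_im : ((m*Y/κ)*im + im^2 + m*Y^2 + m*Y*im + m*im^2)*im^2 ≤ (K1*im^2)*im^2 :=
    mul_le_mul_of_nonneg_right hcoef (sq_nonneg im)
  have hK1im : K1 ≤ im := by rw [hK1]; exact hthr
  have hfin1 : (K1*im^2)*i1 ≤ im^3*i1 := by
    have h' : K1*im^2 ≤ im*im^2 := mul_le_mul_of_nonneg_right hK1im (sq_nonneg im)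
    have h'' := mul_le_mul_of_nonneg_right h' hi1
    calc (K1*im^2)*i1 ≤ (im*im^2)*i1 := h''
      _ = im^3*i1 := by ring
  have hfin2 : (K1*im^2)*im^2 ≤ K1*im^4 := le_of_eq (by ring)
  have hlast : im^3*i1 ≤ (K1 + (2*Y/κ + 2 + 2*Y^2))*im^4 := by
    linarith [hmain, hc_i1, hc_im, hfin1, hfin2, hconst]
  have him3 : (0:ℝ) < im^3 := pow_pos him0 3
  have hfin : i1 ≤ (K1 + (2*Y/κ + 2 + 2*Y^2))*im := by
    have h' : im^3*i1 ≤ im^3*((K1 + (2*Y/κ + 2 + 2*Y^2))*im) := by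
      calc im^3*i1 ≤ (K1 + (2*Y/κ + 2 + 2*Y^2))*im^4 := hlast
        _ = im^3*((K1 + (2*Y/κ + 2 + 2*Y^2))*im) := by ring
    exact le_of_mul_le_mul_left h' him3
  calc i1 ≤ (K1 + (2*Y/κ + 2 + 2*Y^2))*im := hfin
    _ = (m*Y/κ + 1 + m*Y^2 + m*Y + m + 2*Y/κ + 2 + 2*Y^2) * im := by rw [hK1]; ring

private theorem eigen_id (β η γ κ : ℝ) (l : ℂ) (w : ℝ → ℂ)
    (h : IsEigenpairP β η γ κ l w)
    (hnorm : (∫ s in (0:ℝ)..1, ‖w s‖^2) = 1) :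
    (((∫ s in (0:ℝ)..1, ‖iteratedDeriv 2 w s‖^2 : ℝ) : ℂ)
      + ((γ - η^2 : ℝ) : ℂ) * ((∫ s in (0:ℝ)..1, ‖deriv w s‖^2 : ℝ) : ℂ)
      + l * ((κ:ℝ):ℂ) * ((‖deriv w 1‖^2 : ℝ) : ℂ)
      + 2 * l * ((β*η : ℝ):ℂ) * (∫ s in (0:ℝ)..1, deriv w s * (starRingEnd ℂ) (w s))
      + l^2 = 0)
    ∧ ((∫ s in (0:ℝ)..1, deriv w s * (starRingEnd ℂ) (w s))
        + (starRingEnd ℂ) (∫ s in (0:ℝ)..1, deriv w s * (starRingEnd ℂ) (w s))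
        = ((‖w 1‖^2 : ℝ) : ℂ))
    ∧ (((∫ s in (0:ℝ)..1, ‖deriv w s‖^2 : ℝ) : ℂ)
        = deriv w 1 * (starRingEnd ℂ) (w 1)
          - ∫ s in (0:ℝ)..1, iteratedDeriv 2 w s * (starRingEnd ℂ) (w s)) := by
  obtain ⟨hw, -, hode, hw0, hw20, hbc3, hbc4⟩ := h
  set D1 := deriv w with hD1def
  set D2 := iteratedDeriv 2 w with hD2def
  set D3 := iteratedDeriv 3 w with hD3def
  set D4 := iteratedDeriv 4 w with hD4def
  have hdiff0 : Differentiable ℝ w := hw.differentiable (by norm_num)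
  have hdiff1 : Differentiable ℝ D1 := by
    have := hw.differentiable_iteratedDeriv 1 (by norm_num)
    rwa [iteratedDeriv_one] at this
  have hdiff2 : Differentiable ℝ D2 := hw.differentiable_iteratedDeriv 2 (by norm_num)
  have hdiff3 : Differentiable ℝ D3 := hw.differentiable_iteratedDeriv 3 (by norm_num)
  have hd0 : ∀ s, HasDerivAt w (D1 s) s := fun s => (hdiff0 s).hasDerivAt
  have hd1 : ∀ s, HasDerivAt D1 (D2 s) s := by
    intro s
    have : D2 = deriv D1 := by
      rw [hD2def, hD1def, show (2:ℕ) = 1 + 1 from rfl, iteratedDeriv_succ, iteratedDeriv_one]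
    rw [this]
    exact (hdiff1 s).hasDerivAt
  have hd2 : ∀ s, HasDerivAt D2 (D3 s) s := by
    intro s
    have : D3 = deriv D2 := iteratedDeriv_succ
    rw [this]
    exact (hdiff2 s).hasDerivAt
  have hd3 : ∀ s, HasDerivAt D3 (D4 s) s := by
    intro s
    have : D4 = deriv D3 := iteratedDeriv_succ
    rw [this]
    exact (hdiff3 s).hasDerivAt
  have hc0 : Continuous w := hdiff0.continuous
  have hc1 : Continuous D1 := hdiff1.continuous
  have hc2 : Continuous D2 := hdiff2.continuous
  have hc3 : Continuous D3 := hdiff3.continuous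
  have hc4 : Continuous D4 := hw.continuous_iteratedDeriv 4 (by norm_num)
  have hccw : Continuous (fun s => (starRingEnd ℂ) (w s)) := Complex.continuous_conj.comp hc0
  set a : ℂ := ((γ - η^2 : ℝ) : ℂ) with hadef
  set mη : ℂ := ((β*η : ℝ) : ℂ) with hmdef
  have i4 : IntervalIntegrable (fun s => D4 s * (starRingEnd ℂ) (w s)) MeasureTheory.volume 0 1 :=
    (hc4.mul hccw).intervalIntegrable _ _
  have i2 : IntervalIntegrable (fun s => D2 s * (starRingEnd ℂ) (w s)) MeasureTheory.volume 0 1 :=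
    (hc2.mul hccw).intervalIntegrable _ _
  have i1 : IntervalIntegrable (fun s => D1 s * (starRingEnd ℂ) (w s)) MeasureTheory.volume 0 1 :=
    (hc1.mul hccw).intervalIntegrable _ _
  have i0 : IntervalIntegrable (fun s => w s * (starRingEnd ℂ) (w s)) MeasureTheory.volume 0 1 :=
    (hc0.mul hccw).intervalIntegrable _ _
  have h0 : (∫ s in (0:ℝ)..1, D4 s * (starRingEnd ℂ) (w s))
        - a * (∫ s in (0:ℝ)..1, D2 s * (starRingEnd ℂ) (w s))
      + (2*l*mη) * (∫ s in (0:ℝ)..1, D1 s * (starRingEnd ℂ) (w s))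
      + l^2 * (∫ s in (0:ℝ)..1, w s * (starRingEnd ℂ) (w s)) = 0 := by
    rw [← intervalIntegral.integral_const_mul, ← intervalIntegral.integral_const_mul,
      ← intervalIntegral.integral_const_mul, ← intervalIntegral.integral_sub i4 (i2.const_mul a),
      ← intervalIntegral.integral_add ((i4.sub (i2.const_mul a))) (i1.const_mul (2*l*mη)),
      ← intervalIntegral.integral_add (((i4.sub (i2.const_mul a))).add (i1.const_mul (2*l*mη)))
        (i0.const_mul (l^2))]
    rw [show (0:ℂ) = ∫ s in (0:ℝ)..1, (0:ℂ) by simp]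
    apply intervalIntegral.integral_congr
    intro s hs
    have hs' : s ∈ Icc (0:ℝ) 1 := by rwa [uIcc_of_le zero_le_one] at hs
    have := hode s hs'
    show D4 s * (starRingEnd ℂ) (w s) - a * (D2 s * (starRingEnd ℂ) (w s))
      + 2*l*mη * (D1 s * (starRingEnd ℂ) (w s)) + l^2 * (w s * (starRingEnd ℂ) (w s)) = 0
    linear_combination ((starRingEnd ℂ) (w s)) * this
  have hS4a := ibp_conj hd3 hd0 hc4 hc1
  have hS3 := ibp_conj hd2 hd1 hc3 hc2
  have hS2 := ibp_conj hd1 hd0 hc2 hc1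
  have hZc := ibp_conj hd0 hd0 hc1 hc1
  have hsq2 : ∫ s in (0:ℝ)..1, D2 s * (starRingEnd ℂ) (D2 s)
      = (((∫ s in (0:ℝ)..1, ‖D2 s‖^2 : ℝ)) : ℂ) := sq_integral_conj_self hc2
  have hsq1 : ∫ s in (0:ℝ)..1, D1 s * (starRingEnd ℂ) (D1 s)
      = (((∫ s in (0:ℝ)..1, ‖D1 s‖^2 : ℝ)) : ℂ) := sq_integral_conj_self hc1
  have hsq0 : ∫ s in (0:ℝ)..1, w s * (starRingEnd ℂ) (w s) = 1 := by
    rw [sq_integral_conj_self hc0, hnorm]; norm_num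
  have hcw0 : (starRingEnd ℂ) (w 0) = 0 := by rw [hw0]; simp
  have hb : D1 1 * (starRingEnd ℂ) (D1 1) = ((‖D1 1‖^2 : ℝ) : ℂ) := by
    rw [Complex.mul_conj]; norm_cast; rw [Complex.normSq_eq_norm_sq]
  have hpmul : w 1 * (starRingEnd ℂ) (w 1) = ((‖w 1‖^2 : ℝ) : ℂ) := by
    rw [Complex.mul_conj]; norm_cast; rw [Complex.normSq_eq_norm_sq]
  have hconjZ : (∫ s in (0:ℝ)..1, w s * (starRingEnd ℂ) (D1 s))
      = (starRingEnd ℂ) (∫ s in (0:ℝ)..1, D1 s * (starRingEnd ℂ) (w s)) := by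
    rw [← myconj]
    apply intervalIntegral.integral_congr
    intro s _
    show w s * (starRingEnd ℂ) (D1 s) = (starRingEnd ℂ) (D1 s * (starRingEnd ℂ) (w s))
    rw [map_mul, Complex.conj_conj]; ring
  refine ⟨?_, ?_, ?_⟩
  · linear_combination h0 - hS4a + hS3 + a*hS2 - hsq2 - a*hsq1 - (l^2)*hsq0
      - (starRingEnd ℂ) (w 1)*hbc4 + (starRingEnd ℂ) (D1 1)*hbc3 - l*((κ:ℝ):ℂ)*hb
      + (D3 0 - a*D1 0)*hcw0 - (starRingEnd ℂ) (D1 0)*hw20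
  · linear_combination hZc - hconjZ + hpmul - ((starRingEnd ℂ) (w 0)) * hw0
  · linear_combination hS2 - hsq1 - (D1 0) * hcw0

private lemma sq_lower_aux (P M xr xi : ℝ) (h1 : (P - M)^2 ≤ xr^2) (h2 : xi^2 ≤ M^2)
    (hq4 : 4*M*P ≤ P^2) : P^2/2 ≤ xr^2 - xi^2 := by nlinarith [h1, h2, hq4]

private lemma iz_aux (s z nz i1 K2 : ℝ) (e1 : (2*s)*z ≤ (2*s)*nz)
    (hy3 : 2*s*nz ≤ i1 + s^2) (hK : i1 ≤ K2*(s*s)) :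
    (2*z)*s ≤ ((K2+1)*s)*s := by nlinarith [e1, hy3, hK]

end Aux

set_option maxHeartbeats 4000000 in
/-- the squared energy norms of the eigenvectors
`x_n = (w_n/λ_n, w_n)` of the closed-loop system operator tend to `2`. -/
theorem eigenvector_energy_norm_limit (β η γ κ : ℝ) (hβ : β ∈ Ioo (0:ℝ) 1)
    (hη : 0 ≤ η) (hκ : 0 < κ) (hγ : η^2 < γ)
    (N : ℕ) (C : ℝ) (hC : 0 < C) (lam : ℕ → ℂ) (ρ : ℕ → ℂ) (w : ℕ → ℝ → ℂ)
    (heig : ∀ n : ℕ, N ≤ n → IsEigenpairP β η γ κ (lam n) (w n))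
    (hnorm : ∀ n : ℕ, N ≤ n → (∫ s in (0:ℝ)..1, ‖w n s‖^2) = 1)
    (hlam : ∀ n : ℕ, N ≤ n → lam n = Complex.I * (ρ n)^2)
    (hρ : ∀ n : ℕ, N ≤ n →
      ‖ρ n -
          ((((n : ℝ) + 1/2) * Real.pi : ℝ)
            + (((β^2 * η^2 / 2 + γ - η^2 : ℝ) : ℂ)
                + 2 * Complex.I * ((β * η : ℝ) : ℂ)
                + 2 * Complex.I / ((κ : ℝ) : ℂ))
              / ((4 * ((n : ℝ) + 1/2) * Real.pi : ℝ) : ℂ))‖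
        ≤ C / (n : ℝ)^2) :
    Tendsto (fun n : ℕ =>
        (1 / ‖lam n‖^2)
            * ((∫ s in (0:ℝ)..1, ‖iteratedDeriv 2 (w n) s‖^2)
                + (γ - η^2) * ∫ s in (0:ℝ)..1, ‖deriv (w n) s‖^2)
          + ∫ s in (0:ℝ)..1, ‖w n s‖^2)
      atTop (𝓝 2) := by
  obtain ⟨hβ0, hβ1⟩ := hβ
  have hm : 0 ≤ β*η := mul_nonneg hβ0.le hη
  have haa : 0 < γ - η^2 := by linarith
  set cc : ℂ := ((β^2 * η^2 / 2 + γ - η^2 : ℝ) : ℂ)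
                + 2 * Complex.I * ((β * η : ℝ) : ℂ)
                + 2 * Complex.I / ((κ : ℝ) : ℂ) with hccdef
  set M : ℝ := C + ‖cc‖ with hMdef
  have hccnn : 0 ≤ ‖cc‖ := norm_nonneg cc
  have hM0 : 0 < M := by rw [hMdef]; linarith
  set Y : ℝ := max 1 (2*M*(2*Real.pi + M)) with hYdef
  have hY1 : 1 ≤ Y := le_max_left _ _
  have hYnn : (0:ℝ) ≤ Y := le_trans zero_le_one hY1
  set T : ℝ := (β*η)*Y/κ + 1 + (β*η)*Y^2 + (β*η)*Y + (β*η) with hTdef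
  set K2 : ℝ := (β*η)*Y/κ + 1 + (β*η)*Y^2 + (β*η)*Y + (β*η) + 2*Y/κ + 2 + 2*Y^2 with hK2def
  have hK2nn : 0 ≤ K2 := by
    rw [hK2def]
    have h1 : 0 ≤ (β*η)*Y/κ := div_nonneg (mul_nonneg hm hYnn) hκ.le
    have h2 : 0 ≤ (β*η)*Y^2 := mul_nonneg hm (sq_nonneg Y)
    have h3 : 0 ≤ (β*η)*Y := mul_nonneg hm hYnn
    have h4 : 0 ≤ 2*Y/κ := div_nonneg (by linarith) hκ.le
    linarith [h1, h2, h3, h4, sq_nonneg Y]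
  obtain ⟨n₀, hn₀⟩ := exists_nat_ge ((4*M + 2 + max T 1)/3)
  have hbound : ∀ n : ℕ, max (max N 1) n₀ ≤ n →
      ‖((1 / (‖lam n‖)^2)
            * ((∫ s in (0:ℝ)..1, ‖iteratedDeriv 2 (w n) s‖^2)
                + (γ - η^2) * ∫ s in (0:ℝ)..1, ‖deriv (w n) s‖^2)
          + ∫ s in (0:ℝ)..1, ‖w n s‖^2) - 2‖ ≤ ((β*η)*(K2+1)) * (1/(n:ℝ)) := by
    intro n hn
    have hnN : N ≤ n := le_trans (le_trans (le_max_left N 1) (le_max_left _ n₀)) hn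
    have hn1 : 1 ≤ n := le_trans (le_trans (le_max_right N 1) (le_max_left _ n₀)) hn
    have hn₀n : n₀ ≤ n := le_trans (le_max_right _ n₀) hn
    have hn1' : (1:ℝ) ≤ (n:ℝ) := by exact_mod_cast hn1
    have hn0 : (0:ℝ) < (n:ℝ) := by linarith
    have hπ := Real.pi_gt_three
    have hPr3 : 3*(n:ℝ) ≤ ((n:ℝ)+1/2)*Real.pi := by
      linarith [mul_nonneg hn0.le (sub_nonneg.mpr hπ.le), Real.pi_pos]
    have hPr2n : ((n:ℝ)+1/2)*Real.pi ≤ 2*Real.pi*(n:ℝ) := by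
      linarith [mul_nonneg Real.pi_pos.le (show (0:ℝ) ≤ (n:ℝ) - 1/2 by linarith)]
    have hcond : 4*M + 2 + max T 1 ≤ ((n:ℝ)+1/2)*Real.pi := by
      have h' : (n₀:ℝ) ≤ (n:ℝ) := by exact_mod_cast hn₀n
      linarith [hn₀, hPr3]
    have hmaxT1 : (0:ℝ) ≤ max T 1 := le_trans zero_le_one (le_max_right T 1)
    have hPr4M : 4*M ≤ ((n:ℝ)+1/2)*Real.pi := by linarith
    have hPr2 : 2 ≤ ((n:ℝ)+1/2)*Real.pi := by linarith
    have hPrT : max T 1 ≤ ((n:ℝ)+1/2)*Real.pi := by linarith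
    obtain ⟨hre_b, him_b⟩ := rho_bounds C hC cc (ρ n) n hn1 (hρ n hnN)
    rw [← hMdef] at hre_b him_b
    have hlamn := hlam n hnN
    have hre_eq : (lam n).re = -(2*(ρ n).re*(ρ n).im) := by rw [hlamn]; exact lam_re _
    have him_eq : (lam n).im = (ρ n).re^2 - (ρ n).im^2 := by rw [hlamn]; exact lam_im _
    have hρre_lb : ((n:ℝ)+1/2)*Real.pi - M ≤ (ρ n).re := by linarith [(abs_le.mp hre_b).1]
    have hρre_ub : (ρ n).re ≤ ((n:ℝ)+1/2)*Real.pi + M := by linarith [(abs_le.mp hre_b).2]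
    have hρim_M : |(ρ n).im| ≤ M := le_trans him_b (div_le_self hM0.le hn1')
    have hPrM0 : 0 ≤ ((n:ℝ)+1/2)*Real.pi - M := by linarith
    have h1 : (((n:ℝ)+1/2)*Real.pi - M)^2 ≤ (ρ n).re^2 := by
      have key := mul_nonneg (sub_nonneg.mpr hρre_lb)
        (show (0:ℝ) ≤ (ρ n).re + (((n:ℝ)+1/2)*Real.pi - M) by linarith)
      linarith [key]
    have h2 : (ρ n).im^2 ≤ M^2 := by
      have key := mul_nonneg (sub_nonneg.mpr (abs_le.mp hρim_M).2)
        (show (0:ℝ) ≤ M + (ρ n).im by linarith [(abs_le.mp hρim_M).1])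
      linarith [key]
    have hPpos : 0 < ((n:ℝ)+1/2)*Real.pi := by linarith
    have hq4 : 4*M*(((n:ℝ)+1/2)*Real.pi) ≤ (((n:ℝ)+1/2)*Real.pi)^2 := by
      linarith [mul_le_mul_of_nonneg_right hPr4M hPpos.le]
    have him_lb : (((n:ℝ)+1/2)*Real.pi)^2/2 ≤ (lam n).im := by
      rw [him_eq]; exact sq_lower_aux _ M _ _ h1 h2 hq4
    have him_n2 : (n:ℝ)^2 ≤ (lam n).im := by
      have h9 : (3*(n:ℝ))*(3*(n:ℝ)) ≤ (((n:ℝ)+1/2)*Real.pi)*(((n:ℝ)+1/2)*Real.pi) :=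
        mul_le_mul hPr3 hPr3 (by linarith) hPpos.le
      linarith [him_lb, h9, sq_nonneg (n:ℝ)]
    have him_T : max T 1 ≤ (lam n).im := by
      have hq : (((n:ℝ)+1/2)*Real.pi) ≤ (((n:ℝ)+1/2)*Real.pi)^2/2 := by
        linarith [mul_nonneg hPpos.le (show (0:ℝ) ≤ ((n:ℝ)+1/2)*Real.pi - 2 by linarith)]
      linarith [him_lb, hPrT, hq]
    have him1 : (1:ℝ) ≤ (lam n).im := le_trans (le_max_right T 1) him_T
    have himT : T ≤ (lam n).im := le_trans (le_max_left T 1) him_T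
    have him0 : (0:ℝ) < (lam n).im := by linarith
    have hre_Y : |(lam n).re| ≤ Y := by
      have ha1 : |(ρ n).re| ≤ (2*Real.pi + M)*(n:ℝ) := by
        rw [abs_le]; constructor
        · linarith [mul_nonneg (show (0:ℝ) ≤ 2*Real.pi + M by linarith [Real.pi_pos]) hn0.le,
            hρre_lb, hPrM0]
        · linarith [mul_nonneg hM0.le (show (0:ℝ) ≤ (n:ℝ) - 1 by linarith), hρre_ub, hPr2n]
      have ha2 : |(ρ n).im| *(n:ℝ) ≤ M := by
        have h' := him_b
        rw [le_div_iff₀ hn0] at h'; exact h'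
      have habs : |(lam n).re| = 2*(|(ρ n).re| * |(ρ n).im|) := by
        rw [hre_eq, abs_neg, abs_mul, abs_mul, _root_.abs_two]; ring
      have hstep : |(ρ n).re| * |(ρ n).im| ≤ (2*Real.pi + M)*M := by
        calc |(ρ n).re| * |(ρ n).im| ≤ ((2*Real.pi + M)*(n:ℝ)) * |(ρ n).im| :=
            mul_le_mul_of_nonneg_right ha1 (abs_nonneg _)
          _ = (2*Real.pi + M) * (|(ρ n).im| *(n:ℝ)) := by ring
          _ ≤ (2*Real.pi + M)*M := mul_le_mul_of_nonneg_left ha2 (by linarith [Real.pi_pos])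
      rw [habs]
      calc 2*(|(ρ n).re| * |(ρ n).im|) ≤ 2*((2*Real.pi + M)*M) := by linarith
        _ = 2*M*(2*Real.pi + M) := by ring
        _ ≤ Y := le_max_right _ _
    -- eigenfunction facts
    have heign := heig n hnN
    have hnormn := hnorm n hnN
    obtain ⟨keyid, hZZ, hi1id⟩ := eigen_id β η γ κ (lam n) (w n) heign hnormn
    have hw4 : ContDiff ℝ 4 (w n) := heign.1
    have hc0 : Continuous (w n) := (hw4.differentiable (by norm_num)).continuous
    have hc1 : Continuous (deriv (w n)) := by
      have h' := hw4.continuous_iteratedDeriv 1 (by norm_num)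
      rwa [iteratedDeriv_one] at h'
    have hc2 : Continuous (iteratedDeriv 2 (w n)) := hw4.continuous_iteratedDeriv 2 (by norm_num)
    set b : ℝ := ‖deriv (w n) 1‖^2 with hbdef
    set p : ℝ := ‖w n 1‖^2 with hpdef
    set e2 : ℝ := ∫ s in (0:ℝ)..1, ‖iteratedDeriv 2 (w n) s‖^2 with he2def
    set i1 : ℝ := ∫ s in (0:ℝ)..1, ‖deriv (w n) s‖^2 with hi1def
    set Z : ℂ := ∫ s in (0:ℝ)..1, deriv (w n) s * (starRingEnd ℂ) (w n s) with hZdef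
    set S2i : ℂ := ∫ s in (0:ℝ)..1, iteratedDeriv 2 (w n) s * (starRingEnd ℂ) (w n s) with hS2idef
    have he2nn : 0 ≤ e2 := by
      rw [he2def]; exact intervalIntegral.integral_nonneg zero_le_one (fun s _ => sq_nonneg _)
    have hi1nn : 0 ≤ i1 := by
      rw [hi1def]; exact intervalIntegral.integral_nonneg zero_le_one (fun s _ => sq_nonneg _)
    have hbnn : (0:ℝ) ≤ b := by rw [hbdef]; exact sq_nonneg _
    have hpnn : (0:ℝ) ≤ p := by rw [hpdef]; exact sq_nonneg _
    have hZZre := congrArg Complex.re hZZ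
    simp only [Complex.add_re, Complex.conj_re, Complex.ofReal_re] at hZZre
    have hp2 : p = 2*Z.re := by rw [hpdef]; linarith [hZZre]
    have hRZnn : 0 ≤ Z.re := by linarith [hpnn, hp2]
    have hyZ : ∀ t:ℝ, 0 ≤ t → 2*t*‖Z‖ ≤ i1 + t^2 := by
      intro t ht
      have h' := young_conj hc1 hc0 ht
      rw [hnormn, mul_one] at h'
      exact h'
    have hZabs_im : |Z.im| ≤ ‖Z‖ := by
      exact Complex.abs_im_le_norm Z
    have hZabs_re : Z.re ≤ ‖Z‖ := by
      exact Complex.re_le_norm Z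
    have hZ1 : 2*(lam n).im*|Z.im| ≤ i1 + ((lam n).im)^2 := by
      have e1 : (2*(lam n).im)*|Z.im| ≤ (2*(lam n).im)*‖Z‖ :=
        mul_le_mul_of_nonneg_left hZabs_im (by linarith)
      linarith [hyZ ((lam n).im) him0.le, e1]
    have hZ2 : 2*(lam n).im*Z.re ≤ i1 + ((lam n).im)^2 := by
      have e1 : (2*(lam n).im)*Z.re ≤ (2*(lam n).im)*‖Z‖ :=
        mul_le_mul_of_nonneg_left hZabs_re (by linarith)
      linarith [hyZ ((lam n).im) him0.le, e1]
    have hi1re := congrArg Complex.re hi1id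
    simp only [Complex.sub_re, Complex.ofReal_re] at hi1re
    have hq1 : (deriv (w n) 1 * (starRingEnd ℂ) (w n 1)).re ≤ ‖deriv (w n) 1‖*‖w n 1‖ := by
      calc (deriv (w n) 1 * (starRingEnd ℂ) (w n 1)).re
          ≤ ‖deriv (w n) 1 * (starRingEnd ℂ) (w n 1)‖ := Complex.re_le_norm _
        _ = ‖deriv (w n) 1‖ * ‖(starRingEnd ℂ) (w n 1)‖ := norm_mul _ _
        _ = ‖deriv (w n) 1‖*‖w n 1‖ := by rw [Complex.norm_conj]
    have hq2 : -(S2i.re) ≤ ‖S2i‖ := by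
      linarith [neg_abs_le S2i.re, Complex.abs_re_le_norm S2i]
    have hyS2 : 2*(lam n).im*‖S2i‖ ≤ e2 + ((lam n).im)^2 := by
      have h' := young_conj hc2 hc0 him0.le
      rw [hnormn, mul_one] at h'
      exact h'
    have hAM : 2*(‖deriv (w n) 1‖*‖w n 1‖) ≤ b + p := by
      rw [hbdef, hpdef]
      linarith [sq_nonneg (‖deriv (w n) 1‖ - ‖w n 1‖)]
    have h2fact : 2*(lam n).im*i1 ≤ (lam n).im*(b + p) + (e2 + ((lam n).im)^2) := by
      have hi1le : i1 ≤ ‖deriv (w n) 1‖*‖w n 1‖ + ‖S2i‖ := by linarith [hi1re, hq1, hq2]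
      have e1 : (2*(lam n).im)*i1 ≤ (2*(lam n).im)*(‖deriv (w n) 1‖*‖w n 1‖ + ‖S2i‖) :=
        mul_le_mul_of_nonneg_left hi1le (by linarith)
      have e2' : (lam n).im*(2*(‖deriv (w n) 1‖*‖w n 1‖)) ≤ (lam n).im*(b + p) :=
        mul_le_mul_of_nonneg_left hAM him0.le
      linarith [e1, e2', hyS2]
    have hkre := congrArg Complex.re keyid
    have hkim := congrArg Complex.im keyid
    simp only [Complex.add_re, Complex.add_im, Complex.mul_re, Complex.mul_im,
      Complex.ofReal_re, Complex.ofReal_im, Complex.zero_re, Complex.zero_im,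
      Complex.re_ofNat, Complex.im_ofNat, pow_two] at hkre hkim
    have hRE : (e2 + (γ - η^2)*i1) + κ*b*(lam n).re
        + 2*(β*η)*((lam n).re*Z.re - (lam n).im*Z.im)
        + (((lam n).re)^2 - ((lam n).im)^2) = 0 := by
      linear_combination hkre
    have hIM : κ*b*(lam n).im + 2*(β*η)*((lam n).im*Z.re + (lam n).re*Z.im)
        + 2*(lam n).re*(lam n).im = 0 := by
      linear_combination hkim
    have hthr : (β*η)*Y/κ + 1 + (β*η)*Y^2 + (β*η)*Y + (β*η) ≤ (lam n).im := by
      rw [hTdef] at himT; exact himT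
    have hcore := real_core (β*η) (γ-η^2) κ Y e2 i1 b p Z.re Z.im (lam n).re (lam n).im
      hm haa hκ hY1 hre_Y him1 he2nn hi1nn hbnn hp2 hRZnn hZ1 hZ2 h2fact hRE hIM hthr
    have hi1K2 : i1 ≤ K2*(lam n).im := by rw [hK2def]; exact hcore
    have hEX : (e2 + (γ-η^2)*i1)*(lam n).im
        = (lam n).im*(((lam n).re)^2 + ((lam n).im)^2)
          + 2*(β*η)*Z.im*(((lam n).re)^2 + ((lam n).im)^2) := by
      linear_combination (lam n).im*hRE - (lam n).re*hIM
    have habs2 : (‖lam n‖)^2 = ((lam n).re)^2 + ((lam n).im)^2 := by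
      rw [Complex.sq_norm, Complex.normSq_apply]; ring
    have hnsq : 0 < ((lam n).re)^2 + ((lam n).im)^2 := by
      have key := mul_le_mul him1 him1 zero_le_one (by linarith : (0:ℝ) ≤ (lam n).im)
      linarith [key, sq_nonneg ((lam n).re)]
    have hval : (1 / (‖lam n‖)^2)
            * (e2 + (γ - η^2) * i1) + (∫ s in (0:ℝ)..1, ‖w n s‖^2) - 2
          = 2*(β*η)*Z.im/(lam n).im := by
      rw [hnormn, habs2]
      have him0' : (lam n).im ≠ 0 := ne_of_gt him0
      have hnsq' : ((lam n).re)^2 + ((lam n).im)^2 ≠ 0 := ne_of_gt hnsq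
      field_simp
      linear_combination hEX
    have hsq_im : Real.sqrt ((lam n).im) * Real.sqrt ((lam n).im) = (lam n).im :=
      Real.mul_self_sqrt him0.le
    have hsqpos : 0 < Real.sqrt ((lam n).im) := Real.sqrt_pos.mpr him0
    have hIZ3 : 2*|Z.im| ≤ (K2+1)*Real.sqrt ((lam n).im) := by
      have hy3 := hyZ (Real.sqrt ((lam n).im)) hsqpos.le
      have h5 : (Real.sqrt ((lam n).im))^2 = (lam n).im := Real.sq_sqrt him0.le
      have h7 : (2*|Z.im|)*Real.sqrt ((lam n).im)
          ≤ ((K2+1)*Real.sqrt ((lam n).im))*Real.sqrt ((lam n).im) := by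
        have e1 : (2*Real.sqrt ((lam n).im))*|Z.im| ≤ (2*Real.sqrt ((lam n).im))*‖Z‖ :=
          mul_le_mul_of_nonneg_left hZabs_im (by linarith)
        have hK' : i1 ≤ K2*(Real.sqrt ((lam n).im)*Real.sqrt ((lam n).im)) := by
          rw [hsq_im]; exact hi1K2
        exact iz_aux _ _ _ _ _ e1 hy3 hK'
      exact le_of_mul_le_mul_right h7 hsqpos
    have hsqn : (n:ℝ) ≤ Real.sqrt ((lam n).im) := by
      have h' := Real.sqrt_le_sqrt him_n2
      rwa [Real.sqrt_sq hn0.le] at h'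
    rw [Real.norm_eq_abs]
    have hgoal : |(1 / (‖lam n‖)^2)
            * (e2 + (γ - η^2) * i1) + (∫ s in (0:ℝ)..1, ‖w n s‖^2) - 2|
        = 2*(β*η)*|Z.im|/(lam n).im := by
      rw [hval, _root_.abs_div, _root_.abs_of_pos him0, _root_.abs_mul, _root_.abs_mul,
        _root_.abs_two, _root_.abs_of_nonneg hm]
    rw [hgoal]
    have hfinal : 2*(β*η)*|Z.im|/(lam n).im ≤ (β*η)*(K2+1)*(1/(n:ℝ)) := by
      have e1 : (β*η)*(2*|Z.im|) ≤ (β*η)*((K2+1)*Real.sqrt ((lam n).im)) :=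
        mul_le_mul_of_nonneg_left hIZ3 hm
      have e2' : 2*(β*η)*|Z.im|/(lam n).im ≤ (β*η)*(K2+1)*Real.sqrt ((lam n).im)/(lam n).im := by
        exact (div_le_div_iff_of_pos_right him0).mpr (by linarith [e1])
      have e3 : (β*η)*(K2+1)*Real.sqrt ((lam n).im)/(lam n).im
          = (β*η)*(K2+1)/Real.sqrt ((lam n).im) := by
        rw [div_eq_div_iff him0.ne' hsqpos.ne']
        linear_combination (β*η)*(K2+1)*hsq_im
      have e4 : (β*η)*(K2+1)/Real.sqrt ((lam n).im) ≤ (β*η)*(K2+1)/(n:ℝ) := by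
        exact div_le_div_of_nonneg_left (mul_nonneg hm (by linarith : (0:ℝ) ≤ K2+1)) hn0 hsqn
      calc 2*(β*η)*|Z.im|/(lam n).im ≤ (β*η)*(K2+1)*Real.sqrt ((lam n).im)/(lam n).im := e2'
        _ = (β*η)*(K2+1)/Real.sqrt ((lam n).im) := e3
        _ ≤ (β*η)*(K2+1)/(n:ℝ) := e4
        _ = (β*η)*(K2+1)*(1/(n:ℝ)) := by ring
    exact hfinal
  have hu : Tendsto (fun n:ℕ => ((β*η)*(K2+1))*(1/(n:ℝ))) atTop (𝓝 0) := by
    have h0 := tendsto_one_div_atTop_nhds_zero_nat (𝕜 := ℝ)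
    have h1 := h0.const_mul ((β*η)*(K2+1))
    simpa using h1
  have h0 : Tendsto (fun n : ℕ =>
      ((1 / (‖lam n‖)^2)
            * ((∫ s in (0:ℝ)..1, ‖iteratedDeriv 2 (w n) s‖^2)
                + (γ - η^2) * ∫ s in (0:ℝ)..1, ‖deriv (w n) s‖^2)
          + ∫ s in (0:ℝ)..1, ‖w n s‖^2) - 2) atTop (𝓝 0) :=
    squeeze_zero_norm' (eventually_atTop.mpr ⟨max (max N 1) n₀, hbound⟩) hu
  have h2 := h0.add_const 2
  simpa using h2
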